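/- Let H be a finite connected graph on [k] and τ ∈ (2,3). Define f(α) = (1-τ)·∑_i α_i + ∑_{(i,j)∈E_H, α_i+α_j<1}(α_i+α_j-1) on the domain {α : 0 ≤ α_i for all i}. If f has a unique maximizer α*, then α*_i ∈ {0, 1/2, 1} for every i. -/

import Mathlib

open scoped Classical

/-- Free-variation objective: `f(α) = (1-τ)·∑ α_i + ∑_{(i,j)∈E_H, α_i+α_j<1}(α_i+α_j-1)`,
where the sum over edges is realized as a sum over ordered adjacent pairs divided by 2. -/
noncomputable def fobj {k : ℕ} (G : SimpleGraph (Fin k)) (τ : ℝ) (α : Fin k → ℝ) : ℝ :=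
  (1 - τ) * (∑ i, α i) +
    (∑ p ∈ Finset.univ.filter
        (fun p : Fin k × Fin k => G.Adj p.1 p.2 ∧ α p.1 + α p.2 < 1),
      (α p.1 + α p.2 - 1)) / 2

theorem unique_maximizer_half_integer
    (k : ℕ) (hk : 1 ≤ k) (G : SimpleGraph (Fin k)) (hG : G.Connected)
    (τ : ℝ) (hτ2 : 2 < τ) (hτ3 : τ < 3)
    (αstar : Fin k → ℝ) (hnn : ∀ i, 0 ≤ αstar i)
    (hmax : ∀ α : Fin k → ℝ, (∀ i, 0 ≤ α i) → fobj G τ α ≤ fobj G τ αstar)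
    (huniq : ∀ α : Fin k → ℝ, (∀ i, 0 ≤ α i) →
      (∀ β : Fin k → ℝ, (∀ i, 0 ≤ β i) → fobj G τ β ≤ fobj G τ α) → α = αstar) :
    ∀ i, αstar i ∈ ({0, 1/2, 1} : Set ℝ) := by
  intro i0
  by_contra hi0
  simp only [Set.mem_insert_iff, Set.mem_singleton_iff, not_or] at hi0
  obtain ⟨ha0, hah, ha1⟩ := hi0
  set a := αstar i0 with ha_def
  have hapos : 0 < a := lt_of_le_of_ne (hnn i0) (Ne.symm ha0)
  -- Step 1: a < 1
  have halt1 : a < 1 := by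
    rcases lt_or_ge a 1 with h | h
    · exact h
    have hagt : 1 < a := lt_of_le_of_ne h (Ne.symm ha1)
    set β : Fin k → ℝ := Function.update αstar i0 ((a + 1) / 2) with hβ
    have hβval : β i0 = (a + 1) / 2 := Function.update_self _ _ _
    have hβother : ∀ i, i ≠ i0 → β i = αstar i := fun i hi => Function.update_of_ne hi _ _
    have hβnn : ∀ i, 0 ≤ β i := by
      intro i
      by_cases hi : i = i0
      · subst hi; rw [hβval]; linarith
      · rw [hβother i hi]; exact hnn i
    have hfilter : ∀ p : Fin k × Fin k, G.Adj p.1 p.2 →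
        ((β p.1 + β p.2 < 1) ↔ (αstar p.1 + αstar p.2 < 1)) := by
      intro p hp
      by_cases h1 : p.1 = i0
      · have h2 : p.2 ≠ i0 := by intro hc; rw [h1, hc] at hp; exact G.loopless.irrefl i0 hp
        rw [h1, hβval, hβother p.2 h2]
        constructor <;> intro hlt <;> exfalso
        · linarith [hnn p.2]
        · rw [ha_def] at hagt; linarith [hnn p.2]
      · by_cases h2 : p.2 = i0
        · rw [h2, hβval, hβother p.1 h1]
          constructor <;> intro hlt <;> exfalso
          · linarith [hnn p.1]
          · rw [ha_def] at hagt; linarith [hnn p.1]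
        · rw [hβother p.1 h1, hβother p.2 h2]
    have hfeq : (Finset.univ.filter
          (fun p : Fin k × Fin k => G.Adj p.1 p.2 ∧ β p.1 + β p.2 < 1))
        = (Finset.univ.filter
          (fun p : Fin k × Fin k => G.Adj p.1 p.2 ∧ αstar p.1 + αstar p.2 < 1)) := by
      ext p
      simp only [Finset.mem_filter, Finset.mem_univ, true_and]
      constructor
      · rintro ⟨hp, hlt⟩; exact ⟨hp, (hfilter p hp).1 hlt⟩
      · rintro ⟨hp, hlt⟩; exact ⟨hp, (hfilter p hp).2 hlt⟩
    have hterm : ∀ p ∈ Finset.univ.filter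
        (fun p : Fin k × Fin k => G.Adj p.1 p.2 ∧ αstar p.1 + αstar p.2 < 1),
        β p.1 + β p.2 - 1 = αstar p.1 + αstar p.2 - 1 := by
      intro p hp
      simp only [Finset.mem_filter, Finset.mem_univ, true_and] at hp
      obtain ⟨hadj, hlt⟩ := hp
      have h1 : p.1 ≠ i0 := by
        intro hc; rw [hc] at hlt; rw [ha_def] at hagt; linarith [hnn p.2]
      have h2 : p.2 ≠ i0 := by
        intro hc; rw [hc] at hlt; rw [ha_def] at hagt; linarith [hnn p.1]
      rw [hβother p.1 h1, hβother p.2 h2]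
    have hsum : ∑ i, β i - ∑ i, αstar i = (a + 1) / 2 - a := by
      rw [← Finset.sum_sub_distrib, Finset.sum_eq_single i0]
      · rw [hβval, ← ha_def]
      · intro b _ hb; rw [hβother b hb]; ring
      · intro h; exact absurd (Finset.mem_univ i0) h
    have hval : fobj G τ β = fobj G τ αstar + (1 - τ) * ((a + 1) / 2 - a) := by
      unfold fobj
      rw [hfeq, Finset.sum_congr rfl hterm]
      have hB : ∑ i, β i = ∑ i, αstar i + ((a + 1) / 2 - a) := by linarith
      rw [hB]; ring
    have hle := hmax β hβnn
    rw [hval] at hle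
    nlinarith
  -- Setup for the main perturbation argument
  set T : Finset (Fin k × Fin k) :=
    Finset.univ.filter (fun p : Fin k × Fin k => αstar p.1 + αstar p.2 ≠ 1) with hT
  set s : Finset ℝ :=
    insert a (insert (1 - a) (T.image (fun p => |αstar p.1 + αstar p.2 - 1| / 4))) with hs
  have hsne : s.Nonempty := ⟨a, Finset.mem_insert_self _ _⟩
  set ε : ℝ := s.min' hsne with hε
  have hεpos : 0 < ε := by
    rw [hε, Finset.lt_min'_iff]
    intro y hy
    simp only [hs, Finset.mem_insert, Finset.mem_image] at hy
    rcases hy with rfl | rfl | ⟨p, hp, rfl⟩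
    · exact hapos
    · linarith
    · have hne : αstar p.1 + αstar p.2 ≠ 1 := by
        rw [hT] at hp
        exact (Finset.mem_filter.mp hp).2
      have := abs_pos.mpr (sub_ne_zero.mpr hne)
      linarith
  have hεa : ε ≤ a := Finset.min'_le _ _ (Finset.mem_insert_self _ _)
  have hεb : ε ≤ 1 - a :=
    Finset.min'_le _ _ (Finset.mem_insert_of_mem (Finset.mem_insert_self _ _))
  have hεe : ∀ p : Fin k × Fin k, αstar p.1 + αstar p.2 ≠ 1 →
      4 * ε ≤ |αstar p.1 + αstar p.2 - 1| := by
    intro p hp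
    have hmem : |αstar p.1 + αstar p.2 - 1| / 4 ∈ s := by
      apply Finset.mem_insert_of_mem
      apply Finset.mem_insert_of_mem
      exact Finset.mem_image_of_mem _ (Finset.mem_filter.mpr ⟨Finset.mem_univ _, hp⟩)
    have := Finset.min'_le s _ hmem
    linarith
  set d : Fin k → ℝ := fun i => if αstar i = a then 1 else if αstar i = 1 - a then -1 else 0
    with hd
  have hdi0 : d i0 = 1 := by rw [hd]; exact if_pos ha_def.symm
  have hdbound : ∀ i, |d i| ≤ 1 := by
    intro i; rw [hd]; dsimp only; split_ifs <;> norm_num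
  have hdtight : ∀ i j : Fin k, αstar i + αstar j = 1 → d i + d j = 0 := by
    intro i j hij
    have hhalf : (1 : ℝ) - a ≠ a := by intro hc; apply hah; linarith
    rw [hd]; dsimp only
    by_cases h1 : αstar i = a
    · have h2 : αstar j = 1 - a := by rw [h1] at hij; linarith
      have h2' : αstar j ≠ a := by rw [h2]; exact hhalf
      rw [if_pos h1, if_neg h2', if_pos h2]; ring
    · by_cases h1' : αstar i = 1 - a
      · have h2 : αstar j = a := by rw [h1'] at hij; linarith
        rw [if_neg h1, if_pos h1', if_pos h2]; ring
      · have h2 : αstar j ≠ a := by intro hc; apply h1'; rw [hc] at hij; linarith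
        have h2' : αstar j ≠ 1 - a := by intro hc; apply h1; rw [hc] at hij; linarith
        rw [if_neg h1, if_neg h1', if_neg h2, if_neg h2']; ring
  have hbnd : ∀ c : ℝ, |c| ≤ 1 → ∀ i, |c * ε * d i| ≤ ε := by
    intro c hc i
    have h1 : |c * ε * d i| = |c| * ε * |d i| := by
      rw [abs_mul, abs_mul, abs_of_pos hεpos]
    rw [h1]
    have h2 := hdbound i
    have h3 := abs_nonneg (d i)
    have h4 := abs_nonneg c
    have h5 : |c| * |d i| ≤ 1 := mul_le_one₀ hc h3 h2
    calc |c| * ε * |d i| = (|c| * |d i|) * ε := by ring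
      _ ≤ 1 * ε := mul_le_mul_of_nonneg_right h5 hεpos.le
      _ = ε := one_mul ε
  have key : ∀ c : ℝ, |c| ≤ 1 → ∀ p : Fin k × Fin k,
      ((αstar p.1 + c * ε * d p.1) + (αstar p.2 + c * ε * d p.2) < 1 ↔
        αstar p.1 + αstar p.2 < 1) := by
    intro c hc p
    have hb1 := abs_le.mp (hbnd c hc p.1)
    have hb2 := abs_le.mp (hbnd c hc p.2)
    by_cases hp : αstar p.1 + αstar p.2 = 1
    · have h0 : d p.1 + d p.2 = 0 := hdtight _ _ hp
      have e : c * ε * d p.1 + c * ε * d p.2 = 0 := by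
        have : c * ε * d p.1 + c * ε * d p.2 = c * ε * (d p.1 + d p.2) := by ring
        rw [this, h0, mul_zero]
      constructor <;> intro h <;> exfalso <;> linarith
    · have habs := hεe p hp
      rcases lt_or_gt_of_ne hp with hlt | hgt
      · have habs' : |αstar p.1 + αstar p.2 - 1| = 1 - (αstar p.1 + αstar p.2) := by
          rw [abs_of_neg (by linarith)]; ring
        rw [habs'] at habs
        constructor <;> intro _
        · exact hlt
        · linarith
      · have habs' : |αstar p.1 + αstar p.2 - 1| = (αstar p.1 + αstar p.2) - 1 := by
          rw [abs_of_pos (by linarith)]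
        rw [habs'] at habs
        constructor <;> intro h <;> exfalso <;> linarith
  have hfval : ∀ c : ℝ, |c| ≤ 1 → fobj G τ (fun i => αstar i + c * ε * d i)
      = fobj G τ αstar + c * ε * ((1 - τ) * (∑ i, d i)
        + (∑ p ∈ Finset.univ.filter
            (fun p : Fin k × Fin k => G.Adj p.1 p.2 ∧ αstar p.1 + αstar p.2 < 1),
          (d p.1 + d p.2)) / 2) := by
    intro c hc
    have hfilt : Finset.univ.filter (fun p : Fin k × Fin k => G.Adj p.1 p.2 ∧
        (αstar p.1 + c * ε * d p.1) + (αstar p.2 + c * ε * d p.2) < 1)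
        = Finset.univ.filter
          (fun p : Fin k × Fin k => G.Adj p.1 p.2 ∧ αstar p.1 + αstar p.2 < 1) := by
      ext p
      simp only [Finset.mem_filter, Finset.mem_univ, true_and, key c hc p]
    simp only [fobj]
    rw [hfilt]
    rw [Finset.sum_add_distrib, ← Finset.mul_sum]
    rw [show (∑ p ∈ Finset.univ.filter
        (fun p : Fin k × Fin k => G.Adj p.1 p.2 ∧ αstar p.1 + αstar p.2 < 1),
        ((αstar p.1 + c * ε * d p.1) + (αstar p.2 + c * ε * d p.2) - 1))
      = (∑ p ∈ Finset.univ.filter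
        (fun p : Fin k × Fin k => G.Adj p.1 p.2 ∧ αstar p.1 + αstar p.2 < 1),
        ((αstar p.1 + αstar p.2 - 1) + c * ε * (d p.1 + d p.2))) from
      Finset.sum_congr rfl (fun p _ => by ring)]
    rw [Finset.sum_add_distrib, ← Finset.mul_sum]
    ring
  have hnng : ∀ c : ℝ, |c| ≤ 1 → ∀ i, 0 ≤ αstar i + c * ε * d i := by
    intro c hc i
    have hb := (abs_le.mp (hbnd c hc i)).1
    by_cases h1 : αstar i = a
    · linarith
    · by_cases h2 : αstar i = 1 - a
      · linarith
      · have hd0 : d i = 0 := by rw [hd]; dsimp only; rw [if_neg h1, if_neg h2]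
        rw [hd0, mul_zero]
        linarith [hnn i]
  have h1 := hmax (fun i => αstar i + 1 * ε * d i) (hnng 1 (by norm_num))
  have h2 := hmax (fun i => αstar i + (-1) * ε * d i) (hnng (-1) (by norm_num))
  have e1 := hfval 1 (by norm_num)
  have e2 := hfval (-1) (by norm_num)
  have heq : fobj G τ (fun i => αstar i + 1 * ε * d i) = fobj G τ αstar := by
    rw [e1] at h1 ⊢
    rw [e2] at h2
    linarith
  have huu := huniq (fun i => αstar i + 1 * ε * d i) (hnng 1 (by norm_num))
    (fun γ hγ => le_of_le_of_eq (hmax γ hγ) heq.symm)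
  have hcf := congrFun huu i0
  rw [hdi0] at hcf
  simp only [mul_one, one_mul] at hcf
  linarith
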